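/- Assume MM-1, MM-2, A1 and A2. Then for every τ in the interior of Θ, the following equivalence holds: 0 belongs to ∇f(τ) + ∂g(τ) if and only if T(E_π[S̄(Z,τ)]) = τ, where ∂g denotes the convex subdifferential of g. -/

import Mathlib

open MeasureTheory Set Filter Topology
open scoped RealInnerProductSpace Pointwise

private lemma slope_tendsto_right' {u : ℝ → ℝ} {D : ℝ} (hu : HasDerivAt u D 0) :
    Tendsto (fun t => (u t - u 0) / t) (𝓝[>] (0:ℝ)) (𝓝 D) := by
  have h := (hasDerivAt_iff_tendsto_slope.mp hu).mono_left
    (nhdsWithin_mono 0 (fun t ht => ne_of_gt ht))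
  refine h.congr (fun t => ?_)
  simp [slope_def_field, div_eq_inv_mul]

private lemma line_hasDerivAt' {E : Type*} [NormedAddCommGroup E] [NormedSpace ℝ E]
    {h : E → ℝ} {τ v : E} (hd : DifferentiableAt ℝ h τ) :
    HasDerivAt (fun t : ℝ => h (τ + t • v)) (fderiv ℝ h τ v) 0 := by
  have hline : HasDerivAt (fun t : ℝ => τ + t • v) v 0 := by
    simpa using ((hasDerivAt_id (0:ℝ)).smul_const v).const_add τ
  have hF : HasFDerivAt h (fderiv ℝ h τ) (τ + (0:ℝ) • v) := by simpa using hd.hasFDerivAt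
  exact hF.comp_hasDerivAt (0:ℝ) hline

private lemma convex_tangent_le' {E : Type*} [NormedAddCommGroup E] [NormedSpace ℝ E]
    {h : E → ℝ} (hconv : ConvexOn ℝ Set.univ h) {τ : E}
    (hd : DifferentiableAt ℝ h τ) (y : E) :
    h τ + fderiv ℝ h τ (y - τ) ≤ h y := by
  set v := y - τ with hv
  set u : ℝ → ℝ := fun t => h (τ + t • v) with hu_def
  have hu : HasDerivAt u (fderiv ℝ h τ v) 0 := line_hasDerivAt' hd
  have hslope : Tendsto (fun t => (u t - u 0) / t) (𝓝[>] (0:ℝ)) (𝓝 (fderiv ℝ h τ v)) :=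
    slope_tendsto_right' hu
  have hbound : ∀ t ∈ Set.Ioc (0:ℝ) 1, (u t - u 0) / t ≤ h y - h τ := by
    intro t ht
    have hcomb : τ + t • v = (1 - t) • τ + t • y := by
      rw [hv]; module
    have := hconv.2 (Set.mem_univ τ) (Set.mem_univ y) (by linarith [ht.2] : (0:ℝ) ≤ 1 - t)
      ht.1.le (by ring)
    rw [div_le_iff₀ ht.1]
    have hu0 : u 0 = h τ := by simp [hu_def]
    have hut : u t ≤ (1 - t) * h τ + t * h y := by rw [hu_def]; simpa [hcomb] using this
    rw [hu0]; nlinarith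
  have hmem : Set.Ioc (0:ℝ) 1 ∈ 𝓝[>] (0:ℝ) :=
    Ioc_mem_nhdsGT_of_mem ⟨le_refl 0, zero_lt_one⟩
  have hle := le_of_tendsto hslope (eventually_of_mem hmem hbound)
  have hu0 : u 0 = h τ := by simp [hu_def]
  linarith


/-- The convex subdifferential of an extended-real-valued function. -/
def subdiff {E : Type*} [NormedAddCommGroup E] [InnerProductSpace ℝ E]
    (g : E → EReal) (x : E) : Set E :=
  {u | ∀ y, g x + ((⟪u, y - x⟫ : ℝ) : EReal) ≤ g y}

/-- Assume MM-1, MM-2, A1 and A2. Then for every `τ` in the interior of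
`Θ`, `0 ∈ ∇f(τ) + ∂g(τ)` if and only if `T (E_π[S̄(Z,τ)]) = τ`. -/
theorem zero_in_subdiff_iff_fixed_point
    {d q p : ℕ}
    (Θ : Set (EuclideanSpace ℝ (Fin d)))
    (Sset : Set (EuclideanSpace ℝ (Fin q)))
    (g : EuclideanSpace ℝ (Fin d) → EReal)
    (ψ : EuclideanSpace ℝ (Fin d) → ℝ)
    (φ : EuclideanSpace ℝ (Fin d) → EuclideanSpace ℝ (Fin q))
    (π : Measure (EuclideanSpace ℝ (Fin p))) [IsProbabilityMeasure π]
    (ℓ : EuclideanSpace ℝ (Fin p) → EuclideanSpace ℝ (Fin d) → ℝ)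
    (f : EuclideanSpace ℝ (Fin d) → ℝ)
    (barS : EuclideanSpace ℝ (Fin p) → EuclideanSpace ℝ (Fin d) → EuclideanSpace ℝ (Fin q))
    (T : EuclideanSpace ℝ (Fin q) → EuclideanSpace ℝ (Fin d))
    -- g is proper (never −∞, finite somewhere), lower semicontinuous, convex, with domain Θ
    (hg_ne_bot : ∀ x, g x ≠ ⊥)
    (hg_proper : ∃ x, g x ≠ ⊤)
    (hg_lsc : LowerSemicontinuous g)
    (hg_convex : ∀ x y : EuclideanSpace ℝ (Fin d), ∀ a b : ℝ, 0 ≤ a → 0 ≤ b → a + b = 1 →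
      g (a • x + b • y) ≤ (a : EReal) * g x + (b : EReal) * g y)
    (hΘ : Θ = {x | g x ≠ ⊤})
    -- S is a convex subset of ℝ^q
    (hS_convex : Convex ℝ Sset)
    -- the objective f(θ) = E_π[ℓ(Z,θ)], with ℓ measurable and π-integrable
    (hℓ_meas : Measurable (Function.uncurry ℓ))
    (hℓ_int : ∀ θ ∈ Θ, Integrable (fun z => ℓ z θ) π)
    (hf : ∀ θ, f θ = ∫ z, ℓ z θ ∂π)
    -- MM-1: S̄ is measurable, S-valued and integrable, with mean in S, and the surrogate
    -- majorizes f tangentially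
    (hbarS_meas : Measurable (Function.uncurry barS))
    (hbarS_mem : ∀ z, ∀ τ ∈ Θ, barS z τ ∈ Sset)
    (hbarS_int : ∀ τ ∈ Θ, Integrable (fun z => barS z τ) π)
    (hmean_mem : ∀ τ ∈ Θ, (∫ z, barS z τ ∂π) ∈ Sset)
    (hMM1 : ∀ τ ∈ Θ, ∀ θ ∈ Θ,
      f θ ≤ f τ + ψ θ - ψ τ - ⟪∫ z, barS z τ ∂π, φ θ - φ τ⟫)
    -- MM-2: T s is the unique minimizer over ℝ^d of θ ↦ g(θ) + ψ(θ) − ⟨s, φ(θ)⟩,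
    -- T maps S into Θ and is measurable
    (hT_mem : ∀ s ∈ Sset, T s ∈ Θ)
    (hT_min : ∀ s ∈ Sset, ∀ θ : EuclideanSpace ℝ (Fin d),
      g (T s) + ((ψ (T s) - ⟪s, φ (T s)⟫ : ℝ) : EReal)
        ≤ g θ + ((ψ θ - ⟪s, φ θ⟫ : ℝ) : EReal))
    (hT_unique : ∀ s ∈ Sset, ∀ θ₀ : EuclideanSpace ℝ (Fin d),
      (∀ θ : EuclideanSpace ℝ (Fin d),
        g θ₀ + ((ψ θ₀ - ⟪s, φ θ₀⟫ : ℝ) : EReal)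
          ≤ g θ + ((ψ θ - ⟪s, φ θ⟫ : ℝ) : EReal)) → θ₀ = T s)
    (hT_meas : Measurable T)
    -- A1: convexity of the smooth part of the surrogate; regularity of ψ, φ
    (hA1_convex : ∀ s ∈ Sset, ConvexOn ℝ Set.univ (fun θ => ψ θ - ⟪s, φ θ⟫))
    (hint_ne : (interior Θ).Nonempty)
    (hψ_C1 : ContDiffOn ℝ 1 ψ (interior Θ))
    (hφ_C1 : ContDiffOn ℝ 1 φ (interior Θ))
    -- A2: f is C¹ on the interior of Θ
    (hf_C1 : ContDiffOn ℝ 1 f (interior Θ)) :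
    ∀ τ ∈ interior Θ,
      ((0 : EuclideanSpace ℝ (Fin d)) ∈ gradient f τ +ᵥ subdiff g τ)
        ↔ T (∫ z, barS z τ ∂π) = τ := by
  intro τ hτ
  have hτΘ : τ ∈ Θ := interior_subset hτ
  set s : EuclideanSpace ℝ (Fin q) := ∫ z, barS z τ ∂π with hs_def
  have hsS : s ∈ Sset := hmean_mem τ hτΘ
  set h : EuclideanSpace ℝ (Fin d) → ℝ := fun θ => ψ θ - ⟪s, φ θ⟫ with hh_def
  have hU : interior Θ ∈ 𝓝 τ := isOpen_interior.mem_nhds hτ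
  have hfd : DifferentiableAt ℝ f τ := (hf_C1.contDiffAt hU).differentiableAt one_ne_zero
  have hψd : DifferentiableAt ℝ ψ τ := (hψ_C1.contDiffAt hU).differentiableAt one_ne_zero
  have hφd : DifferentiableAt ℝ φ τ := (hφ_C1.contDiffAt hU).differentiableAt one_ne_zero
  have hhd : DifferentiableAt ℝ h τ := hψd.sub ((differentiableAt_const s).inner ℝ hφd)
  -- gradient identity: ∇f τ = ∇h τ
  have hFmax : IsLocalMax (fun θ => f θ - h θ) τ := by
    filter_upwards [hU] with θ hθ
    have hm := hMM1 τ hτΘ θ (interior_subset hθ)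
    rw [← hs_def, inner_sub_right] at hm
    simp only [hh_def]
    linarith
  have hfd_eq : fderiv ℝ f τ = fderiv ℝ h τ := by
    have h0 : fderiv ℝ (fun θ => f θ - h θ) τ = 0 := hFmax.fderiv_eq_zero
    rw [fderiv_fun_sub hfd hhd] at h0
    exact sub_eq_zero.mp h0
  have hgradinner : ∀ v : EuclideanSpace ℝ (Fin d), ⟪gradient f τ, v⟫ = fderiv ℝ h τ v := by
    intro v
    rw [gradient, InnerProductSpace.toDual_symm_apply, hfd_eq]
  have htan : ∀ y, h τ + fderiv ℝ h τ (y - τ) ≤ h y :=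
    fun y => convex_tangent_le' (hA1_convex s hsS) hhd y
  have hgτ_ne_top : g τ ≠ ⊤ := by rw [hΘ] at hτΘ; exact hτΘ
  obtain ⟨r, hr⟩ : ∃ r : ℝ, g τ = (r : EReal) :=
    ⟨(g τ).toReal, ((EReal.coe_toReal hgτ_ne_top (hg_ne_bot τ))).symm⟩
  constructor
  · -- 0 ∈ grad + subdiff  →  T s = τ
    intro h0
    rw [Set.mem_vadd_set] at h0
    obtain ⟨u, huS, huv⟩ := h0
    have hu_eq : u = -gradient f τ := by
      have huv' : gradient f τ + u = 0 := huv
      exact eq_neg_of_add_eq_zero_right huv'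
    refine (hT_unique s hsS τ ?_).symm
    intro θ
    show g τ + ((h τ : ℝ) : EReal) ≤ g θ + ((h θ : ℝ) : EReal)
    by_cases hgθ : g θ = ⊤
    · rw [hr, hgθ]
      simp
    · obtain ⟨rθ, hrθ⟩ : ∃ rθ : ℝ, g θ = (rθ : EReal) :=
        ⟨(g θ).toReal, ((EReal.coe_toReal hgθ (hg_ne_bot θ))).symm⟩
      have h1 := huS θ
      rw [hr, hrθ, ← EReal.coe_add, EReal.coe_le_coe_iff] at h1
      have hDu : ⟪u, θ - τ⟫ = - fderiv ℝ h τ (θ - τ) := by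
        rw [hu_eq, inner_neg_left, hgradinner]
      rw [hDu] at h1
      rw [hr, hrθ, ← EReal.coe_add, ← EReal.coe_add, EReal.coe_le_coe_iff]
      have := htan θ
      linarith
  · -- T s = τ  →  0 ∈ grad + subdiff
    intro hTs
    rw [Set.mem_vadd_set]
    refine ⟨-gradient f τ, ?_, by simp⟩
    have hmin : ∀ θ, g τ + ((h τ : ℝ) : EReal) ≤ g θ + ((h θ : ℝ) : EReal) := by
      intro θ
      have := hT_min s hsS θ
      rw [hTs] at this
      exact this
    intro y
    by_cases hgy : g y = ⊤
    · rw [hgy]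
      simp [hr]
    · obtain ⟨ry, hry⟩ : ∃ ry : ℝ, g y = (ry : EReal) :=
        ⟨(g y).toReal, ((EReal.coe_toReal hgy (hg_ne_bot y))).symm⟩
      set v := y - τ with hv
      set u : ℝ → ℝ := fun t => h (τ + t • v) with hu_def
      set D : ℝ := fderiv ℝ h τ v with hD_def
      have hbound : ∀ t ∈ Set.Ioc (0:ℝ) 1, r - (u t - u 0) / t ≤ ry := by
        intro t ht
        have hcomb : τ + t • v = (1 - t) • τ + t • y := by rw [hv]; module
        have hconv := hg_convex τ y (1 - t) t (by linarith [ht.2]) ht.1.le (by ring)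
        rw [hr, hry, ← EReal.coe_mul, ← EReal.coe_mul, ← EReal.coe_add] at hconv
        rw [← hcomb] at hconv
        have hne_top : g (τ + t • v) ≠ ⊤ :=
          ne_top_of_le_ne_top (EReal.coe_ne_top _) hconv
        obtain ⟨rt, hrt⟩ : ∃ rt : ℝ, g (τ + t • v) = (rt : EReal) :=
          ⟨(g (τ + t • v)).toReal, ((EReal.coe_toReal hne_top (hg_ne_bot _))).symm⟩
        rw [hrt, EReal.coe_le_coe_iff] at hconv
        have hm := hmin (τ + t • v)
        rw [hr, hrt, ← EReal.coe_add, ← EReal.coe_add, EReal.coe_le_coe_iff] at hm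
        have hu0 : u 0 = h τ := by simp [hu_def]
        have hut : u t = h (τ + t • v) := rfl
        rw [← hu0, ← hut] at hm
        have h2 : r - ry ≤ (u t - u 0) / t := by
          rw [le_div_iff₀ ht.1]
          nlinarith
        linarith
      have htend : Tendsto (fun t => r - (u t - u 0) / t) (𝓝[>] (0:ℝ)) (𝓝 (r - D)) :=
        tendsto_const_nhds.sub (slope_tendsto_right' (line_hasDerivAt' hhd))
      have hmem : Set.Ioc (0:ℝ) 1 ∈ 𝓝[>] (0:ℝ) :=
        Ioc_mem_nhdsGT_of_mem ⟨le_refl 0, zero_lt_one⟩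
      have hfinal : r - D ≤ ry := le_of_tendsto htend (eventually_of_mem hmem hbound)
      have hDinner : ⟪-gradient f τ, y - τ⟫ = -D := by
        rw [inner_neg_left, hgradinner, ← hv, hD_def]
      rw [hr, hry, hDinner, ← EReal.coe_add, EReal.coe_le_coe_iff]
      linarith
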